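/- Let p be prime, q a prime power with p ∣ q−1, and ω ∈ 𝔽_q of order p. If f : ℤ/p → 𝔽_q is nonzero with |supp f| = m, then the complement of supp f̂ contains no arithmetic progression of length m in ℤ/p, where f̂(t) = p⁻¹ ∑_{z} ω^{tz} f(z). -/

import Mathlib

/-- The finite-field Fourier transform f̂(t) = p⁻¹ ∑_z ω^{tz} f(z). -/
def dft {p : ℕ} [NeZero p] {F : Type} [Field F] (ω : F) (f : ZMod p → F) :
    ZMod p → F :=
  fun t => (p : F)⁻¹ * ∑ z : ZMod p, ω ^ (t * z).val * f z

/-- Let p be prime, q a prime power with p ∣ q−1, and ω ∈ 𝔽_q of order p.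
If f : ℤ/p → 𝔽_q is nonzero with |supp f| = m, then the complement of supp f̂ contains
no arithmetic progression of length m in ℤ/p. -/
theorem stmt2 (p q : ℕ) [Fact p.Prime] (hq : IsPrimePow q) (hpq : p ∣ q - 1)
    {F : Type} [Field F] [Fintype F] (hF : Fintype.card F = q)
    (ω : F) (hω : orderOf ω = p)
    (f : ZMod p → F) (hf : f ≠ 0) (m : ℕ) (hm : (Function.support f).ncard = m) :
    ¬ ∃ a b : ZMod p,
        ((Finset.range m).image fun j : ℕ => a + (j : ZMod p) * b).card = m ∧
        ∀ t ∈ (Finset.range m).image fun j : ℕ => a + (j : ZMod p) * b,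
          dft ω f t = 0 := by
  classical
  rintro ⟨a, b, hcard, hzero⟩
  have hp : p.Prime := Fact.out
  have hωp : ω ^ p = 1 := hω ▸ pow_orderOf_eq_one ω
  have hω0 : ω ≠ 0 := by
    intro h0
    rw [h0, zero_pow hp.ne_zero] at hωp
    exact zero_ne_one hωp
  -- (p : F) ≠ 0
  have hpF : (p : F) ≠ 0 := by
    intro h
    have hchar : CharP F (ringChar F) := ringChar.charP F
    have hdvd : ringChar F ∣ p := (CharP.cast_eq_zero_iff F (ringChar F) p).mp h
    have hne1 : ringChar F ≠ 1 := CharP.ringChar_ne_one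
    have hrp : ringChar F = p := (hp.eq_one_or_self_of_dvd _ hdvd).resolve_left hne1
    haveI : CharP F p := hrp ▸ hchar
    have hsub : (ω - 1) ^ p = ω ^ p - 1 ^ p := sub_pow_char ..
    rw [hωp, one_pow, sub_self] at hsub
    have : ω - 1 = 0 := pow_eq_zero_iff hp.ne_zero |>.mp hsub
    have : ω = 1 := by linear_combination this
    rw [this, orderOf_one] at hω
    exact hp.one_lt.ne' hω.symm
  -- the support as a finset
  set S : Finset (ZMod p) := (Function.support f).toFinset with hSdef
  have hScard : S.card = m := by
    rw [← hm]; exact (Set.ncard_eq_toFinset_card' _).symm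
  have hmem : ∀ z, z ∈ S ↔ f z ≠ 0 := by
    intro z; simp [hSdef, Function.mem_support]
  have hm0 : 0 < m := by
    rcases Nat.eq_zero_or_pos m with h | h
    · exfalso; apply hf; funext z
      by_contra hz
      have : z ∈ S := (hmem z).mpr hz
      rw [Finset.card_eq_zero.mp (hScard.trans h)] at this
      exact absurd this (Finset.notMem_empty z)
    · exact h
  -- enumeration of the support
  set E : Fin m ≃ S := (finCongr hScard.symm).trans S.equivFin.symm with hEdef
  set e : Fin m → ZMod p := fun i => (E i : ZMod p) with hedef
  have he : ∀ i, e i ∈ S := fun i => (E i).2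
  have heinj : Function.Injective e := fun i j h =>
    E.injective (Subtype.ext h)
  -- periodicity of powers of ω
  have hper : ∀ k : ℕ, ω ^ ((k : ZMod p)).val = ω ^ k := by
    intro k
    rw [ZMod.val_natCast, ← hω, pow_mod_orderOf]
  have hper2 : ∀ (u : ZMod p) (k : ℕ), u = (k : ZMod p) → ω ^ u.val = ω ^ k := by
    intro u k h; rw [h, hper]
  set x : Fin m → F := fun i => ω ^ (b * e i).val with hxdef
  set v : Fin m → F := fun i => ω ^ (a * e i).val * f (e i) with hvdef
  -- the linear system
  have hsum : ∀ j : Fin m, ∑ i, v i * x i ^ (j : ℕ) = 0 := by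
    intro j
    have hjm : a + ((j : ℕ) : ZMod p) * b ∈
        (Finset.range m).image fun j : ℕ => a + (j : ZMod p) * b :=
      Finset.mem_image.mpr ⟨j, Finset.mem_range.mpr j.2, rfl⟩
    have ht := hzero _ hjm
    unfold dft at ht
    have hsum0 : ∑ z : ZMod p, ω ^ ((a + ((j : ℕ) : ZMod p) * b) * z).val * f z = 0 := by
      rcases mul_eq_zero.mp ht with h | h
      · exact absurd h (inv_ne_zero hpF)
      · exact h
    have hS0 : ∑ z ∈ S, ω ^ ((a + ((j : ℕ) : ZMod p) * b) * z).val * f z = 0 := by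
      rw [← hsum0]
      refine Finset.sum_subset (Finset.subset_univ S) ?_
      intro z _ hz
      have : f z = 0 := by
        by_contra h; exact hz ((hmem z).mpr h)
      rw [this, mul_zero]
    have hre : ∑ z ∈ S, ω ^ ((a + ((j : ℕ) : ZMod p) * b) * z).val * f z =
        ∑ i : Fin m, ω ^ ((a + ((j : ℕ) : ZMod p) * b) * e i).val * f (e i) := by
      rw [← Finset.sum_attach S (fun z => ω ^ ((a + ((j : ℕ) : ZMod p) * b) * z).val * f z)]
      exact (E.sum_comp (fun z : S => ω ^ ((a + ((j : ℕ) : ZMod p) * b) * (z : ZMod p)).val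
        * f (z : ZMod p))).symm
    have hterm : ∀ i : Fin m,
        ω ^ ((a + ((j : ℕ) : ZMod p) * b) * e i).val * f (e i) = v i * x i ^ (j : ℕ) := by
      intro i
      have hcast : (a + ((j : ℕ) : ZMod p) * b) * e i =
          (((a * e i).val + (j : ℕ) * (b * e i).val : ℕ) : ZMod p) := by
        push_cast
        ring_nf
        simp [ZMod.natCast_val, ZMod.cast_id]
        ring
      rw [hper2 _ _ hcast, pow_add, pow_mul']
      rw [hvdef, hxdef]
      ring
    rw [hre] at hS0
    rw [← hS0]
    exact Finset.sum_congr rfl (fun i _ => (hterm i).symm)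
  -- injectivity of x
  have hxinj : Function.Injective x := by
    rcases eq_or_lt_of_le (show 1 ≤ m from hm0) with h1 | h2
    · -- m = 1
      have : Subsingleton (Fin m) := by rw [← h1]; infer_instance
      exact fun i j _ => Subsingleton.elim i j
    · -- m ≥ 2, so b ≠ 0
      have hb : b ≠ 0 := by
        intro hb0
        rw [hb0] at hcard
        have : ((Finset.range m).image fun j : ℕ => a + (j : ZMod p) * 0) = {a} := by
          apply Finset.eq_singleton_iff_nonempty_unique_mem.mpr
          constructor
          · exact ⟨a + (0 : ZMod p) * 0, Finset.mem_image.mpr ⟨0, Finset.mem_range.mpr hm0, by norm_num⟩⟩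
          · intro y hy
            obtain ⟨k, _, hk⟩ := Finset.mem_image.mp hy
            rw [← hk]; ring
        rw [this, Finset.card_singleton] at hcard
        omega
      intro i j h
      have hval : (b * e i).val = (b * e j).val := by
        have h1 : (b * e i).val ∈ Set.Iio (orderOf ω) := by
          rw [hω]; exact ZMod.val_lt _
        have h2 : (b * e j).val ∈ Set.Iio (orderOf ω) := by
          rw [hω]; exact ZMod.val_lt _
        exact pow_injOn_Iio_orderOf h1 h2 h
      have : b * e i = b * e j := ZMod.val_injective p hval
      exact heinj (mul_left_cancel₀ hb this)
  -- Vandermonde determinant is a unit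
  have hdet : IsUnit (Matrix.vandermonde x).det := by
    rw [Matrix.det_vandermonde]
    apply isUnit_iff_ne_zero.mpr
    rw [Finset.prod_ne_zero_iff]
    intro i _
    rw [Finset.prod_ne_zero_iff]
    intro j hj
    exact sub_ne_zero.mpr fun hxy => (Finset.mem_Ioi.mp hj).ne' (hxinj hxy)
  -- the vector v is zero
  have hvm : Matrix.vecMul v (Matrix.vandermonde x) = 0 := by
    funext j
    simpa [Matrix.vecMul, dotProduct, Matrix.vandermonde] using hsum j
  have hv0 : v = 0 := by
    calc v = Matrix.vecMul v ((Matrix.vandermonde x) * (Matrix.vandermonde x)⁻¹) := by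
          rw [Matrix.mul_nonsing_inv _ hdet, Matrix.vecMul_one]
      _ = Matrix.vecMul (Matrix.vecMul v (Matrix.vandermonde x)) (Matrix.vandermonde x)⁻¹ := by
          rw [Matrix.vecMul_vecMul]
      _ = 0 := by rw [hvm, Matrix.zero_vecMul]
  -- contradiction
  have i0 : Fin m := ⟨0, hm0⟩
  have : v i0 = 0 := by rw [hv0]; rfl
  rw [hvdef] at this
  rcases mul_eq_zero.mp this with h | h
  · exact pow_ne_zero _ hω0 h
  · exact ((hmem (e i0)).mp (he i0)) h
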